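/- Let α ≥ −1 and 0 < q < r. For holomorphic g on the unit disc, (‖g‖_{α,2q}^{2q} − |g(0)|^{2q})^{1/(2q)} ≤ (‖g‖_{α,2r}^{2r} − |g(0)|^{2r})^{1/(2r)}, where ‖·‖_{α,p} is the A^p_α (weighted Bergman, or Hardy if α = −1) norm. -/

import Mathlib

open MeasureTheory Metric
open scoped ENNReal

section AuxLemmas
open Set

lemma aux_sub_rpow (x y : ℝ≥0∞) {s : ℝ} (hs : 1 ≤ s) : (x - y) ^ s ≤ x ^ s - y ^ s := by
  have hs0 : (0:ℝ) < s := lt_of_lt_of_le one_pos hs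
  rcases le_total x y with h | h
  · rw [tsub_eq_zero_of_le h, ENNReal.zero_rpow_of_pos hs0]
    exact zero_le
  · by_cases hy : y = ⊤
    · rw [hy, tsub_eq_zero_of_le le_top, ENNReal.zero_rpow_of_pos hs0]
      exact zero_le
    refine ENNReal.le_sub_of_add_le_right (ENNReal.rpow_ne_top_of_nonneg hs0.le hy) ?_
    calc (x - y) ^ s + y ^ s ≤ ((x - y) + y) ^ s := ENNReal.add_rpow_le_rpow_add _ _ hs
    _ = x ^ s := by rw [tsub_add_cancel_of_le h]

lemma aux_holder {X : Type*} [MeasurableSpace X] (μ : Measure X) (F W : X → ℝ≥0∞)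
    (hF : AEMeasurable F μ) (hW : AEMeasurable W μ)
    (hW0 : ∀ᵐ x ∂μ, W x ≠ 0) (hWt : ∀ᵐ x ∂μ, W x ≠ ⊤)
    {q r : ℝ} (hq : 0 < q) (hqr : q < r) :
    ∫⁻ x, F x ^ q * W x ∂μ
      ≤ (∫⁻ x, F x ^ r * W x ∂μ) ^ (q / r) * (∫⁻ x, W x ∂μ) ^ (1 - q / r) := by
  have hr : (0:ℝ) < r := hq.trans hqr
  have hp1 : (1:ℝ) < r / q := (one_lt_div hq).2 hqr
  have hconj : (r / q).HolderConjugate (r / (r - q)) := by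
    rw [Real.holderConjugate_iff]
    constructor
    · exact hp1
    · field_simp; ring
  have h1 : ∫⁻ x, F x ^ q * W x ∂μ
      = ∫⁻ x, ((fun x => F x ^ q * W x ^ (q / r)) * fun x => W x ^ (1 - q / r)) x ∂μ := by
    apply lintegral_congr_ae
    filter_upwards [hW0, hWt] with x h0 ht
    simp only [Pi.mul_apply]
    rw [mul_assoc, ← ENNReal.rpow_add _ _ h0 ht]
    norm_num
  rw [h1]
  have h2 := ENNReal.lintegral_mul_le_Lp_mul_Lq μ hconj
    (((hF.pow_const q).mul (hW.pow_const (q / r)))) (hW.pow_const (1 - q / r))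
  refine h2.trans (le_of_eq ?_)
  congr 1
  · congr 1
    · apply lintegral_congr_ae
      filter_upwards [hW0, hWt] with x h0 ht
      rw [Pi.mul_apply, ENNReal.mul_rpow_of_nonneg _ _ (by positivity), ← ENNReal.rpow_mul,
        ← ENNReal.rpow_mul, show q * (r / q) = r by field_simp,
        show q / r * (r / q) = 1 by field_simp, ENNReal.rpow_one]
    · field_simp
  · congr 1
    · apply lintegral_congr_ae
      filter_upwards [] with x
      rw [← ENNReal.rpow_mul,
        show (1 - q / r) * (r / (r - q)) = 1 by
          have : r - q ≠ 0 := sub_ne_zero.2 (ne_of_gt hqr)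
          field_simp, ENNReal.rpow_one]
    · field_simp

lemma aux_key {X : Type*} [MeasurableSpace X] (μ : Measure X) (F W : X → ℝ≥0∞)
    (hF : AEMeasurable F μ) (hW : AEMeasurable W μ)
    (hW0 : ∀ᵐ x ∂μ, W x ≠ 0) (hWt : ∀ᵐ x ∂μ, W x ≠ ⊤)
    {q r : ℝ} (hq : 0 < q) (hqr : q < r) {T : ℝ≥0∞} (hT0 : T ≠ 0) (hTt : T ≠ ⊤)
    (hmass : ∫⁻ x, W x ∂μ ≤ T) :
    ((∫⁻ x, F x ^ q * W x ∂μ) / T) ^ (1 / (2 * q))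
      ≤ ((∫⁻ x, F x ^ r * W x ∂μ) / T) ^ (1 / (2 * r)) := by
  have hr : (0:ℝ) < r := hq.trans hqr
  set Iq := ∫⁻ x, F x ^ q * W x ∂μ
  set Ir := ∫⁻ x, F x ^ r * W x ∂μ
  have h1 : Iq / T ≤ (Ir / T) ^ (q / r) := by
    have H : Iq ≤ Ir ^ (q / r) * T ^ (1 - q / r) := by
      refine (aux_holder μ F W hF hW hW0 hWt hq hqr).trans ?_
      refine mul_le_mul_right (ENNReal.rpow_le_rpow hmass ?_) _
      rw [sub_nonneg]
      exact (div_le_one hr).2 hqr.le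
    have h2 : (Ir ^ (q / r) * T ^ (1 - q / r)) / T = (Ir / T) ^ (q / r) := by
      calc (Ir ^ (q / r) * T ^ (1 - q / r)) / T
          = Ir ^ (q / r) * (T ^ (1 - q / r) * T⁻¹) := by
            rw [div_eq_mul_inv, mul_assoc]
        _ = Ir ^ (q / r) * T⁻¹ ^ (q / r) := by
            congr 1
            rw [ENNReal.inv_rpow, ← ENNReal.rpow_neg, ← ENNReal.rpow_neg_one T,
              ← ENNReal.rpow_add _ _ hT0 hTt]
            congr 1
            ring
        _ = (Ir / T) ^ (q / r) := by
            rw [ENNReal.div_rpow_of_nonneg _ _ (by positivity : (0:ℝ) ≤ q / r),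
              ENNReal.inv_rpow]
            exact (div_eq_mul_inv _ _).symm
    rw [← h2]
    exact ENNReal.div_le_div_right H _
  calc (Iq / T) ^ (1 / (2 * q)) ≤ ((Ir / T) ^ (q / r)) ^ (1 / (2 * q)) :=
        ENNReal.rpow_le_rpow h1 (by positivity)
    _ = (Ir / T) ^ (1 / (2 * r)) := by
        rw [← ENNReal.rpow_mul, show q / r * (1 / (2 * q)) = 1 / (2 * r) by field_simp]

lemma aux_1d_meas {α : ℝ} : Measurable (fun y : ℝ => ENNReal.ofReal (y * (1 - y^2)^α)) := by
  apply Measurable.ennreal_ofReal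
  exact measurable_id'.mul ((measurable_const.sub (measurable_id'.pow_const 2)).pow measurable_const)

lemma aux_1d_step {α : ℝ} (hα : -1 < α) {t : ℝ} (ht0 : 0 ≤ t) (ht1 : t < 1) :
    ∫⁻ y in Set.Ioo (0:ℝ) t, ENNReal.ofReal (y * (1 - y^2)^α)
      ≤ ENNReal.ofReal (1 / (2*(α+1))) := by
  have hα1 : (0:ℝ) < α + 1 := by linarith
  have hcont : ContinuousOn (fun y : ℝ => y * (1 - y^2)^α) (Icc 0 t) := by
    apply ContinuousOn.mul continuousOn_id
    apply ContinuousOn.rpow_const (by fun_prop)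
    intro y hy
    left
    have : y^2 < 1 := by nlinarith [hy.1, hy.2]
    nlinarith
  have hInt : IntegrableOn (fun y : ℝ => y * (1 - y^2)^α) (Ioo 0 t) := by
    exact (hcont.integrableOn_Icc).mono_set Ioo_subset_Icc_self
  have hnn : 0 ≤ᵐ[volume.restrict (Ioo (0:ℝ) t)] fun y : ℝ => y * (1 - y^2)^α := by
    filter_upwards [ae_restrict_mem measurableSet_Ioo] with y hy
    have h2 : (0:ℝ) < 1 - y^2 := by nlinarith [hy.1, hy.2]
    exact mul_nonneg hy.1.le (Real.rpow_nonneg h2.le α)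
  rw [← ofReal_integral_eq_lintegral_ofReal hInt hnn]
  apply ENNReal.ofReal_le_ofReal
  have hderiv : ∀ y ∈ uIcc (0:ℝ) t,
      HasDerivAt (fun y : ℝ => -(1 - y^2)^(α+1) / (2*(α+1))) (y * (1 - y^2)^α) y := by
    intro y hy
    rw [uIcc_of_le ht0] at hy
    have hpos : (0:ℝ) < 1 - y^2 := by nlinarith [hy.1, hy.2]
    have h1 : HasDerivAt (fun y : ℝ => 1 - y^2) (-(2*y)) y := by
      simpa using (hasDerivAt_pow 2 y).const_sub 1
    have h2 := h1.rpow_const (p := α + 1) (Or.inl hpos.ne')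
    have h3 := (h2.neg).div_const (2*(α+1))
    refine h3.congr_deriv ?_
    rw [add_sub_cancel_right]
    field_simp
  have hIcc : ∫ y in Ioo (0:ℝ) t, y * (1 - y^2)^α = ∫ y in (0:ℝ)..t, y * (1 - y^2)^α := by
    rw [intervalIntegral.integral_of_le ht0, ← integral_Ioc_eq_integral_Ioo]
  rw [hIcc, intervalIntegral.integral_eq_sub_of_hasDerivAt hderiv]
  · have hnn2 : (0:ℝ) ≤ (1 - t^2)^(α+1) := Real.rpow_nonneg (by nlinarith) _
    have h0 : (1:ℝ) - 0^2 = 1 := by norm_num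
    rw [h0, Real.one_rpow, ← sub_div]
    have hc : (0:ℝ) < 2*(α+1) := by positivity
    rw [div_le_div_iff₀ hc hc]
    nlinarith
  · exact (intervalIntegrable_iff_integrableOn_Ioo_of_le ht0).2 hInt

lemma aux_1d {α : ℝ} (hα : -1 < α) :
    ∫⁻ y in Set.Ioo (0:ℝ) 1, ENNReal.ofReal (y * (1 - y^2)^α)
      ≤ ENNReal.ofReal (1 / (2*(α+1))) := by
  set h : ℝ → ℝ≥0∞ := fun y => ENNReal.ofReal (y * (1 - y^2)^α) with hh
  set u : ℕ → ℝ := fun n => 1 - 1/(n+1) with hu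
  have hu0 : ∀ n, 0 ≤ u n := by
    intro n
    have : 1/((n:ℝ)+1) ≤ 1 := by
      rw [div_le_one (by positivity)]
      simp
    simp only [hu]; linarith
  have hu1 : ∀ n, u n < 1 := by
    intro n
    have : 0 < 1/((n:ℝ)+1) := by positivity
    simp only [hu]; linarith
  have humono : Monotone u := by
    intro n m hnm
    simp only [hu]
    have : 1/((m:ℝ)+1) ≤ 1/((n:ℝ)+1) := by
      apply one_div_le_one_div_of_le (by positivity)
      exact_mod_cast by omega
    linarith
  have key : (Set.indicator (Ioo (0:ℝ) 1) h)
      = fun y => ⨆ n, Set.indicator (Ioo (0:ℝ) (u n)) h y := by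
    funext y
    by_cases hy : y ∈ Ioo (0:ℝ) 1
    · obtain ⟨n, hn⟩ := exists_nat_one_div_lt (show (0:ℝ) < 1 - y by linarith [hy.2])
      rw [Set.indicator_of_mem hy]
      apply le_antisymm
      · apply le_iSup_of_le n
        rw [Set.indicator_of_mem (Set.mem_Ioo.mpr ⟨hy.1, by simp only [hu]; linarith⟩)]
      · exact iSup_le fun n => Set.indicator_le_self' (fun _ _ => zero_le) y
    · rw [Set.indicator_of_notMem hy]
      have hz : ∀ n, Set.indicator (Ioo (0:ℝ) (u n)) h y = 0 := fun n =>
        Set.indicator_of_notMem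
          (fun hmem => hy (Ioo_subset_Ioo le_rfl (hu1 n).le hmem)) _
      simp [hz]
  have h1 : ∫⁻ y in Ioo (0:ℝ) 1, h y = ⨆ n, ∫⁻ y in Ioo (0:ℝ) (u n), h y := by
    rw [← lintegral_indicator measurableSet_Ioo, key,
      lintegral_iSup (fun n => aux_1d_meas.indicator measurableSet_Ioo)]
    · congr 1
      funext n
      rw [lintegral_indicator measurableSet_Ioo]
    · intro n m hnm
      intro y
      exact Set.indicator_le_indicator_of_subset
        (Ioo_subset_Ioo le_rfl (humono hnm)) (fun _ => zero_le) y
  rw [h1]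
  exact iSup_le fun n => aux_1d_step hα (hu0 n) (hu1 n)

lemma aux_w_meas {α : ℝ} : Measurable (fun y : ℝ => ENNReal.ofReal ((1 - y^2)^α)) := by
  apply Measurable.ennreal_ofReal
  exact (measurable_const.sub (measurable_id'.pow_const 2)).pow measurable_const

lemma aux_mass {α : ℝ} (hα : -1 < α) :
    ∫⁻ z in Metric.ball (0:ℂ) 1, ENNReal.ofReal ((1 - ‖z‖ ^ 2) ^ α)
      ≤ ENNReal.ofReal Real.pi / ENNReal.ofReal (α+1) := by
  have hα1 : (0:ℝ) < α + 1 := by linarith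
  set F : ℝ → ℝ≥0∞ := fun y => if y < 1 then ENNReal.ofReal ((1-y^2)^α) else 0 with hF
  have hFmeas : Measurable F := by
    exact Measurable.ite measurableSet_Iio aux_w_meas measurable_const
  have step1 : ∫⁻ z in Metric.ball (0:ℂ) 1, ENNReal.ofReal ((1 - ‖z‖ ^ 2) ^ α)
      = ∫⁻ z : ℂ, F ‖z‖ := by
    rw [← lintegral_indicator measurableSet_ball]
    congr 1
    funext z
    by_cases hz : z ∈ Metric.ball (0:ℂ) 1
    · rw [Set.indicator_of_mem hz, hF]
      beta_reduce
      rw [if_pos (show ‖z‖ < 1 by simpa using mem_ball_zero_iff.mp hz)]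
    · rw [Set.indicator_of_notMem hz, hF]
      beta_reduce
      rw [if_neg (show ¬ ‖z‖ < 1 by simpa using (mem_ball_zero_iff.not.mp hz))]
  rw [step1]
  have mp := (volume : Measure ℂ).measurePreserving_homeomorphUnitSphereProd
  have hdim : Module.finrank ℝ ℂ = 2 := Complex.finrank_real_complex
  have step2 : ∫⁻ z : ℂ, F ‖z‖
      = ∫⁻ p : (sphere (0:ℂ) 1 × Ioi (0:ℝ)), F p.2.1
          ∂((volume : Measure ℂ).toSphere.prod (.volumeIoiPow (Module.finrank ℝ ℂ - 1))) := by
    rw [← mp.lintegral_comp (f := fun p : (sphere (0:ℂ) 1 × Ioi (0:ℝ)) => F p.2.1)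
        (show Measurable fun p : (sphere (0:ℂ) 1 × Ioi (0:ℝ)) => F p.2.1 from
          hFmeas.comp (measurable_subtype_coe.comp measurable_snd))]
    simp only [homeomorphUnitSphereProd_apply_snd_coe]
    rw [lintegral_subtype_comap (measurableSet_singleton (0:ℂ)).compl
        (fun z => F ‖z‖), restrict_compl_singleton]
  rw [step2]
  have step3 : ∫⁻ p : (sphere (0:ℂ) 1 × Ioi (0:ℝ)), F p.2.1
          ∂((volume : Measure ℂ).toSphere.prod (.volumeIoiPow (Module.finrank ℝ ℂ - 1)))
      = (volume : Measure ℂ).toSphere univ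
        * ∫⁻ y : Ioi (0:ℝ), F y.1 ∂(Measure.volumeIoiPow (Module.finrank ℝ ℂ - 1)) := by
    rw [lintegral_prod _ ((show Measurable fun p : (sphere (0:ℂ) 1 × Ioi (0:ℝ)) => F p.2.1 from
        hFmeas.comp (measurable_subtype_coe.comp measurable_snd)).aemeasurable)]
    have hc : (fun x : sphere (0:ℂ) 1 =>
        ∫⁻ y : Ioi (0:ℝ), F ((x, y)).2.1 ∂(Measure.volumeIoiPow (Module.finrank ℝ ℂ - 1)))
        = fun _ => ∫⁻ y : Ioi (0:ℝ), F y.1 ∂(Measure.volumeIoiPow (Module.finrank ℝ ℂ - 1)) := rfl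
    rw [hc, lintegral_const, mul_comm]
  rw [step3]
  have step4 : ∫⁻ y : Ioi (0:ℝ), F y.1 ∂(Measure.volumeIoiPow (Module.finrank ℝ ℂ - 1))
      ≤ ENNReal.ofReal (1 / (2*(α+1))) := by
    rw [hdim]
    rw [Measure.volumeIoiPow]
    rw [lintegral_withDensity_eq_lintegral_mul _
      (show Measurable fun r : Ioi (0:ℝ) => ENNReal.ofReal (r.1 ^ (2-1)) from
        (measurable_subtype_coe.pow_const _).ennreal_ofReal)
      (show Measurable fun y : Ioi (0:ℝ) => F y.1 from hFmeas.comp measurable_subtype_coe)]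
    simp only [Pi.mul_apply]
    have : (∫⁻ y : Ioi (0:ℝ), (ENNReal.ofReal (y.1 ^ (2-1)) * F y.1)
        ∂(Measure.comap Subtype.val volume))
        = ∫⁻ y in Ioi (0:ℝ), ENNReal.ofReal (y ^ (2-1)) * F y := by
      exact lintegral_subtype_comap measurableSet_Ioi
        (fun y => ENNReal.ofReal (y ^ (2-1)) * F y)
    rw [this]
    have heq : ∫⁻ y in Ioi (0:ℝ), ENNReal.ofReal (y ^ (2-1)) * F y
        = ∫⁻ y in Ioo (0:ℝ) 1, ENNReal.ofReal (y * (1 - y^2)^α) := by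
      rw [show (2-1) = 1 from rfl]
      have hptw : ∀ y ∈ Ioi (0:ℝ), ENNReal.ofReal (y ^ 1) * F y
          = Set.indicator (Iio (1:ℝ)) (fun y => ENNReal.ofReal (y * (1 - y^2)^α)) y := by
        intro y hy0
        by_cases hy : y < 1
        · rw [Set.indicator_of_mem (Set.mem_Iio.mpr hy), hF]
          simp only [if_pos hy, pow_one]
          rw [← ENNReal.ofReal_mul (le_of_lt hy0)]
        · rw [Set.indicator_of_notMem (show y ∉ Iio 1 from hy), hF]
          simp [if_neg hy]
      rw [setLIntegral_congr_fun measurableSet_Ioi hptw]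
      rw [lintegral_indicator measurableSet_Iio, Measure.restrict_restrict measurableSet_Iio,
        show Iio (1:ℝ) ∩ Ioi 0 = Ioo 0 1 by rw [Set.inter_comm]; exact Set.Ioi_inter_Iio]
    rw [heq]
    exact aux_1d hα
  calc (volume : Measure ℂ).toSphere univ
        * ∫⁻ y : Ioi (0:ℝ), F y.1 ∂(Measure.volumeIoiPow (Module.finrank ℝ ℂ - 1))
      ≤ (volume : Measure ℂ).toSphere univ * ENNReal.ofReal (1 / (2*(α+1))) :=
        mul_le_mul_right step4 _
    _ = ENNReal.ofReal Real.pi / ENNReal.ofReal (α+1) := by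
        rw [Measure.toSphere_apply_univ, hdim, Complex.volume_ball]
        rw [ENNReal.ofReal_one, one_pow, one_mul]
        rw [← ENNReal.ofReal_coe_nnreal, NNReal.coe_real_pi]
        rw [mul_comm ((2:ℕ):ℝ≥0∞), mul_assoc]
        rw [show ((2:ℕ):ℝ≥0∞) = ENNReal.ofReal 2 by simp]
        rw [← ENNReal.ofReal_mul (by norm_num), ← ENNReal.ofReal_mul Real.pi_pos.le]
        rw [show Real.pi * (2 * (1/(2*(α+1)))) = Real.pi / (α+1) by field_simp,
          ENNReal.ofReal_div_of_pos hα1]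
end AuxLemmas

/-- The `A^p_α` (quasi-)norm, valued in `ℝ≥0∞`: for `α > −1` the weighted Bergman
norm `((α+1)∫_D |f|^p (1−|z|²)^α dA)^{1/p}` (with respect to normalized area
measure `dA = dLeb/π`), and for `α = −1` the Hardy space `H^p` norm
`sup_{0<r<1} (∫_T |f(rζ)|^p dσ(ζ))^{1/p}`. -/
noncomputable def AnormE (α p : ℝ) (f : ℂ → ℂ) : ℝ≥0∞ :=
  if α = -1 then
    ⨆ r : {x : ℝ // 0 < x ∧ x < 1},
      ((∫⁻ θ in Set.Ioc (0:ℝ) (2 * Real.pi),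
          ENNReal.ofReal (‖f (((r : ℝ) : ℂ) * Complex.exp ((θ : ℂ) * Complex.I))‖ ^ p))
        / ENNReal.ofReal (2 * Real.pi)) ^ (1 / p)
  else
    (ENNReal.ofReal (α + 1) *
      ((∫⁻ z in Metric.ball (0:ℂ) 1,
          ENNReal.ofReal (‖f z‖ ^ p * (1 - ‖z‖ ^ 2) ^ α))
        / ENNReal.ofReal Real.pi)) ^ (1 / p)

section AuxMono
open Set

lemma aux_ofreal_pow {x p : ℝ} (hx : 0 ≤ x) (hp : 0 ≤ p) :
    ENNReal.ofReal (x ^ (2 * p)) = ENNReal.ofReal (x ^ 2) ^ p := by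
  rw [ENNReal.ofReal_rpow_of_nonneg (by positivity) hp]
  congr 1
  rw [← Real.rpow_natCast x 2, ← Real.rpow_mul hx]
  norm_num

lemma aux_mono (α q r : ℝ) (hα : -1 ≤ α) (hq : 0 < q) (hqr : q < r) (g : ℂ → ℂ)
    (hg : DifferentiableOn ℂ g (Metric.ball 0 1)) :
    AnormE α (2*q) g ≤ AnormE α (2*r) g := by
  have h2q : (0:ℝ) < 2*q := by linarith
  rw [AnormE, AnormE]
  by_cases hm1 : α = -1
  · rw [if_pos hm1, if_pos hm1]
    apply iSup_mono
    intro s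
    set c : ℝ → ℂ := fun θ => ((s : ℝ) : ℂ) * Complex.exp ((θ : ℂ) * Complex.I) with hc
    have hmem : ∀ θ : ℝ, c θ ∈ Metric.ball (0:ℂ) 1 := by
      intro θ
      rw [mem_ball_zero_iff, hc]
      simp only [norm_mul, Complex.norm_real, Real.norm_eq_abs,
        Complex.norm_exp_ofReal_mul_I, mul_one]
      rw [abs_of_pos s.2.1]
      exact s.2.2
    have hccont : Continuous c := by
      exact continuous_const.mul (Complex.continuous_exp.comp
        (Complex.continuous_ofReal.mul continuous_const))
    have hgc : Continuous fun θ : ℝ => g (c θ) := by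
      rw [← continuousOn_univ]
      exact hg.continuousOn.comp hccont.continuousOn (fun θ _ => hmem θ)
    have hFmeas : AEMeasurable (fun θ : ℝ =>
        ENNReal.ofReal (‖g (((s : ℝ) : ℂ) * Complex.exp ((θ : ℂ) * Complex.I))‖ ^ 2))
        (volume.restrict (Set.Ioc (0:ℝ) (2*Real.pi))) := by
      exact (ENNReal.continuous_ofReal.comp
        ((continuous_norm.comp hgc).pow 2)).measurable.aemeasurable
    have hT0 : ENNReal.ofReal (2*Real.pi) ≠ 0 := by
      simp [ENNReal.ofReal_eq_zero, not_le]
      positivity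
    have hrw : ∀ p : ℝ, 0 ≤ p → (∫⁻ θ in Set.Ioc (0:ℝ) (2 * Real.pi),
        ENNReal.ofReal (‖g (((s : ℝ) : ℂ) * Complex.exp ((θ : ℂ) * Complex.I))‖ ^ (2*p)))
        = ∫⁻ θ in Set.Ioc (0:ℝ) (2 * Real.pi),
          (fun θ : ℝ => ENNReal.ofReal
            (‖g (((s : ℝ) : ℂ) * Complex.exp ((θ : ℂ) * Complex.I))‖ ^ 2)) θ ^ p
          * (fun _ : ℝ => (1:ℝ≥0∞)) θ := by
      intro p hp
      apply lintegral_congr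
      intro θ
      rw [mul_one, aux_ofreal_pow (norm_nonneg _) hp]
    have h1 := aux_key (volume.restrict (Set.Ioc (0:ℝ) (2*Real.pi)))
      (fun θ : ℝ => ENNReal.ofReal
        (‖g (((s : ℝ) : ℂ) * Complex.exp ((θ : ℂ) * Complex.I))‖ ^ 2))
      (fun _ => (1:ℝ≥0∞)) hFmeas aemeasurable_const
      (Filter.Eventually.of_forall (fun _ => one_ne_zero))
      (Filter.Eventually.of_forall (fun _ => ENNReal.one_ne_top))
      hq hqr hT0 ENNReal.ofReal_ne_top
      (by
        rw [lintegral_const, Measure.restrict_apply MeasurableSet.univ, Set.univ_inter,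
          Real.volume_Ioc, one_mul]
        simp)
    rw [hrw q hq.le, hrw r (hq.trans hqr).le]
    exact h1
  · rw [if_neg hm1, if_neg hm1]
    have hα' : -1 < α := lt_of_le_of_ne hα (Ne.symm hm1)
    have hα1 : (0:ℝ) < α + 1 := by linarith
    set W : ℂ → ℝ≥0∞ := fun z => ENNReal.ofReal ((1 - ‖z‖ ^ 2) ^ α) with hWdef
    set F : ℂ → ℝ≥0∞ := fun z => ENNReal.ofReal (‖g z‖ ^ 2) with hFdef
    set T : ℝ≥0∞ := ENNReal.ofReal Real.pi / ENNReal.ofReal (α+1) with hTdef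
    have hT0 : T ≠ 0 := by
      rw [hTdef]
      simp only [ne_eq, ENNReal.div_eq_zero_iff, ENNReal.ofReal_ne_top, or_false,
        ENNReal.ofReal_eq_zero, not_le]
      exact Real.pi_pos
    have hα1' : ENNReal.ofReal (α+1) ≠ 0 := by
      simp only [ne_eq, ENNReal.ofReal_eq_zero, not_le]
      linarith
    have hTt : T ≠ ⊤ := by
      rw [hTdef]
      simp [ENNReal.div_eq_top, hα1', ENNReal.ofReal_ne_top]
    have hFmeas : AEMeasurable F (volume.restrict (Metric.ball (0:ℂ) 1)) := by
      apply ContinuousOn.aemeasurable _ measurableSet_ball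
      exact ENNReal.continuous_ofReal.comp_continuousOn
        ((continuous_norm.comp_continuousOn hg.continuousOn).pow 2)
    have hWmeas : AEMeasurable W (volume.restrict (Metric.ball (0:ℂ) 1)) := by
      exact (((measurable_const.sub (continuous_norm.measurable.pow_const 2)).pow
        measurable_const).ennreal_ofReal).aemeasurable
    have hW0 : ∀ᵐ z ∂(volume.restrict (Metric.ball (0:ℂ) 1)), W z ≠ 0 := by
      filter_upwards [ae_restrict_mem measurableSet_ball] with z hz
      rw [hWdef]
      simp only [ne_eq, ENNReal.ofReal_eq_zero, not_le]
      apply Real.rpow_pos_of_pos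
      have : ‖z‖ < 1 := by simpa [mem_ball_zero_iff] using hz
      nlinarith [norm_nonneg z]
    have hWt : ∀ᵐ z ∂(volume.restrict (Metric.ball (0:ℂ) 1)), W z ≠ ⊤ :=
      Filter.Eventually.of_forall (fun _ => ENNReal.ofReal_ne_top)
    have hrw : ∀ p : ℝ, 0 ≤ p → (∫⁻ z in Metric.ball (0:ℂ) 1,
        ENNReal.ofReal (‖g z‖ ^ (2*p) * (1 - ‖z‖ ^ 2) ^ α))
        = ∫⁻ z in Metric.ball (0:ℂ) 1, F z ^ p * W z := by
      intro p hp
      apply lintegral_congr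
      intro z
      rw [ENNReal.ofReal_mul (Real.rpow_nonneg (norm_nonneg _) _), hFdef, hWdef,
        aux_ofreal_pow (norm_nonneg _) hp]
    have hpi0 : ENNReal.ofReal Real.pi ≠ 0 := by
      simp only [ne_eq, ENNReal.ofReal_eq_zero, not_le]
      exact Real.pi_pos
    have hCrw : ∀ I : ℝ≥0∞, ENNReal.ofReal (α + 1) * (I / ENNReal.ofReal Real.pi) = I / T := by
      intro I
      have h1 : I / T = I * (ENNReal.ofReal (α+1) * (ENNReal.ofReal Real.pi)⁻¹) := by
        rw [hTdef, div_eq_mul_inv, ENNReal.inv_div (Or.inl ENNReal.ofReal_ne_top)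
          (Or.inl hα1'), div_eq_mul_inv]
      rw [h1, div_eq_mul_inv]
      ring
    rw [hrw q hq.le, hrw r (hq.trans hqr).le, hCrw, hCrw]
    exact aux_key _ F W hFmeas hWmeas hW0 hWt hq hqr hT0 hTt (aux_mass hα')

/-- For `α ≥ −1` and `0 < q < r`,
`(‖g‖_{α,2q}^{2q} − |g 0|^{2q})^{1/(2q)} ≤ (‖g‖_{α,2r}^{2r} − |g 0|^{2r})^{1/(2r)}`. -/
theorem stmt_9 (α q r : ℝ) (hα : -1 ≤ α) (hq : 0 < q) (hqr : q < r)
    (g : ℂ → ℂ) (hg : DifferentiableOn ℂ g (Metric.ball 0 1)) :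
    (AnormE α (2 * q) g ^ (2 * q) - ENNReal.ofReal (‖g 0‖ ^ (2 * q))) ^ (1 / (2 * q))
      ≤ (AnormE α (2 * r) g ^ (2 * r)
          - ENNReal.ofReal (‖g 0‖ ^ (2 * r))) ^ (1 / (2 * r)) := by
  have hr : (0:ℝ) < r := hq.trans hqr
  have hab := aux_mono α q r hα hq hqr g hg
  have hx : (‖g 0‖ ^ (2*q)) ^ ((r:ℝ)/q) = ‖g 0‖ ^ (2*r) := by
    rw [← Real.rpow_mul (norm_nonneg _)]
    congr 1
    field_simp
  have key : (AnormE α (2 * q) g ^ (2 * q)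
        - ENNReal.ofReal (‖g 0‖ ^ (2 * q))) ^ ((r:ℝ)/q)
      ≤ AnormE α (2 * r) g ^ (2 * r) - ENNReal.ofReal (‖g 0‖ ^ (2 * r)) := by
    calc (AnormE α (2 * q) g ^ (2 * q)
          - ENNReal.ofReal (‖g 0‖ ^ (2 * q))) ^ ((r:ℝ)/q)
        ≤ (AnormE α (2 * q) g ^ (2 * q)) ^ ((r:ℝ)/q)
            - ENNReal.ofReal (‖g 0‖ ^ (2 * q)) ^ ((r:ℝ)/q) :=
          aux_sub_rpow _ _ ((one_le_div hq).2 hqr.le)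
      _ = AnormE α (2 * q) g ^ (2 * r) - ENNReal.ofReal (‖g 0‖ ^ (2 * r)) := by
          rw [← ENNReal.rpow_mul, show 2*q*((r:ℝ)/q) = 2*r by field_simp,
            ENNReal.ofReal_rpow_of_nonneg (Real.rpow_nonneg (norm_nonneg _) _)
              (by positivity), hx]
      _ ≤ AnormE α (2 * r) g ^ (2 * r)
            - ENNReal.ofReal (‖g 0‖ ^ (2 * r)) :=
          tsub_le_tsub_right (ENNReal.rpow_le_rpow hab (by positivity)) _
  calc (AnormE α (2 * q) g ^ (2 * q)
        - ENNReal.ofReal (‖g 0‖ ^ (2 * q))) ^ (1 / (2 * q))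
      = ((AnormE α (2 * q) g ^ (2 * q)
          - ENNReal.ofReal (‖g 0‖ ^ (2 * q))) ^ ((r:ℝ)/q)) ^ (1 / (2 * r)) := by
        rw [← ENNReal.rpow_mul, show (r:ℝ)/q*(1/(2*r)) = 1/(2*q) by field_simp]
    _ ≤ (AnormE α (2 * r) g ^ (2 * r)
          - ENNReal.ofReal (‖g 0‖ ^ (2 * r))) ^ (1 / (2 * r)) :=
        ENNReal.rpow_le_rpow key (by positivity)

end AuxMono
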